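/- Let p, q > 1 and let a, b ≥ 0 with a + b > 0 and c > 0. Define φ : (0,∞) → ℝ by φ(t) = a t^{(p+1)/p} + b t^{(q+1)/q} − (c/2) t². Then φ(t) > 0 for all sufficiently small t > 0, φ(t) < 0 for all sufficiently large t, and there exists a unique t₀ > 0 at which φ attains its maximum over (0,∞); moreover t₀ is the unique critical point of φ in (0,∞). -/

import Mathlib

open Real

private lemma small_aux (a c α : ℝ) (ha : 0 < a) (hc : 0 < c) (hα2 : α < 2) :
    ∃ δ : ℝ, 0 < δ ∧ ∀ t : ℝ, 0 < t → t < δ → c/2 * t ^ (2:ℕ) < a * t ^ α := by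
  refine ⟨(2*a/c) ^ ((2-α)⁻¹), Real.rpow_pos_of_pos (by positivity) _, fun t ht htδ => ?_⟩
  have hexp : (0:ℝ) < 2 - α := by linarith
  have key : t ^ (2-α) < 2*a/c := by
    calc t ^ (2-α) < ((2*a/c) ^ ((2-α)⁻¹)) ^ (2-α) :=
          Real.rpow_lt_rpow ht.le htδ hexp
      _ = 2*a/c := Real.rpow_inv_rpow (by positivity) hexp.ne'
  have hsplit : (t:ℝ) ^ (2:ℕ) = t ^ α * t ^ (2-α) := by
    rw [← Real.rpow_natCast t 2, show ((2:ℕ):ℝ) = α + (2-α) by push_cast; ring,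
      Real.rpow_add ht]
  rw [hsplit]
  have htα : (0:ℝ) < t ^ α := Real.rpow_pos_of_pos ht α
  have h1 : c/2 * (t ^ α * t ^ (2-α)) < c/2 * (t ^ α * (2*a/c)) := by
    have := mul_lt_mul_of_pos_left key htα
    nlinarith
  have h2 : c/2 * (t ^ α * (2*a/c)) = a * t ^ α := by field_simp
  linarith

private lemma large_aux (a b c α β : ℝ) (ha : 0 ≤ a) (hb : 0 ≤ b) (hc : 0 < c)
    (hα2 : α < 2) (hβ2 : β < 2) :
    ∃ T : ℝ, ∀ t : ℝ, T < t → a * t ^ α + b * t ^ β < c/2 * t ^ (2:ℕ) := by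
  set s := max α β with hs
  have hs2 : s < 2 := max_lt hα2 hβ2
  have hexp : (0:ℝ) < 2 - s := by linarith
  have hM : (0:ℝ) ≤ 2*(a+b+1)/c := by positivity
  refine ⟨max 1 ((2*(a+b+1)/c) ^ ((2-s)⁻¹)), fun t htT => ?_⟩
  have ht1 : (1:ℝ) ≤ t := le_of_lt (lt_of_le_of_lt (le_max_left _ _) htT)
  have ht : (0:ℝ) < t := lt_of_lt_of_le one_pos ht1
  have hts : (0:ℝ) < t ^ s := Real.rpow_pos_of_pos ht s
  have hαs : t ^ α ≤ t ^ s := Real.rpow_le_rpow_of_exponent_le ht1 (le_max_left _ _)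
  have hβs : t ^ β ≤ t ^ s := Real.rpow_le_rpow_of_exponent_le ht1 (le_max_right _ _)
  have key : 2*(a+b+1)/c < t ^ (2-s) := by
    calc 2*(a+b+1)/c = ((2*(a+b+1)/c) ^ ((2-s)⁻¹)) ^ (2-s) :=
          (Real.rpow_inv_rpow hM hexp.ne').symm
      _ < t ^ (2-s) := Real.rpow_lt_rpow (Real.rpow_nonneg hM _)
          (lt_of_le_of_lt (le_max_right _ _) htT) hexp
  have hsplit : (t:ℝ) ^ (2:ℕ) = t ^ s * t ^ (2-s) := by
    rw [← Real.rpow_natCast t 2, show ((2:ℕ):ℝ) = s + (2-s) by push_cast; ring,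
      Real.rpow_add ht]
  rw [hsplit]
  have h1 : a * t ^ α + b * t ^ β ≤ (a+b) * t ^ s := by nlinarith
  have h2 : (a+b+1) * t ^ s < c/2 * (t ^ s * t ^ (2-s)) := by
    have := mul_lt_mul_of_pos_left key (show (0:ℝ) < c/2 * t ^ s by positivity)
    have hcan : c/2 * t ^ s * (2*(a+b+1)/c) = (a+b+1) * t ^ s := by field_simp
    nlinarith
  nlinarith

private lemma core_aux (a b c α β : ℝ) (ha : 0 ≤ a) (hb : 0 ≤ b) (hab : 0 < a + b) (hc : 0 < c)
    (hα1 : 1 < α) (hα2 : α < 2) (hβ1 : 1 < β) (hβ2 : β < 2) :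
    ∃! t₀ : ℝ, 0 < t₀ ∧
      (∀ t : ℝ, 0 < t →
        a * t ^ α + b * t ^ β - c/2 * t ^ (2:ℕ)
          ≤ a * t₀ ^ α + b * t₀ ^ β - c/2 * t₀ ^ (2:ℕ)) ∧
      (∀ t : ℝ, 0 < t →
        (deriv (fun s : ℝ => a * s ^ α + b * s ^ β - c/2 * s ^ (2:ℕ)) t = 0 ↔ t = t₀)) := by
  set φ : ℝ → ℝ := fun s => a * s ^ α + b * s ^ β - c/2 * s ^ (2:ℕ) with hφ
  set h : ℝ → ℝ := fun s => a * α * s ^ (α-2) + b * β * s ^ (β-2) - c with hh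
  -- derivative of φ
  have hderiv : ∀ t : ℝ, 0 < t → HasDerivAt φ (t * h t) t := by
    intro t ht
    have d1 : HasDerivAt (fun s : ℝ => s ^ α) (α * t ^ (α-1)) t :=
      Real.hasDerivAt_rpow_const (Or.inr hα1.le)
    have d2 : HasDerivAt (fun s : ℝ => s ^ β) (β * t ^ (β-1)) t :=
      Real.hasDerivAt_rpow_const (Or.inr hβ1.le)
    have d3 : HasDerivAt (fun s : ℝ => s ^ (2:ℕ)) (2 * t ^ (1:ℕ)) t := by
      simpa using hasDerivAt_pow 2 t
    have := ((d1.const_mul a).add (d2.const_mul b)).sub (d3.const_mul (c/2))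
    convert this using 1
    · rfl
    · rfl
    · rfl
    have e1 : t ^ (α-1) = t * t ^ (α-2) := by
      rw [show α-1 = 1+(α-2) by ring, Real.rpow_add ht, Real.rpow_one]
    have e2 : t ^ (β-1) = t * t ^ (β-2) := by
      rw [show β-1 = 1+(β-2) by ring, Real.rpow_add ht, Real.rpow_one]
    rw [hh]; simp only [e1, e2]; ring
  have hdz : ∀ t : ℝ, 0 < t → deriv φ t = t * h t := fun t ht => (hderiv t ht).deriv
  -- continuity of φ
  have hcont : Continuous φ := by
    apply Continuous.sub
    · exact (continuous_const.mul (Real.continuous_rpow_const (by linarith))).add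
        (continuous_const.mul (Real.continuous_rpow_const (by linarith)))
    · exact continuous_const.mul (continuous_pow 2)
  -- h strictly decreasing on (0,∞)
  have hanti : StrictAntiOn h (Set.Ioi 0) := by
    intro x hx y hy hxy
    have k1 : y ^ (α-2) < x ^ (α-2) := Real.rpow_lt_rpow_of_neg hx hxy (by linarith)
    have k2 : y ^ (β-2) < x ^ (β-2) := Real.rpow_lt_rpow_of_neg hx hxy (by linarith)
    have l1 : a * α * y ^ (α-2) ≤ a * α * x ^ (α-2) :=
      mul_le_mul_of_nonneg_left k1.le (by positivity)
    have l2 : b * β * y ^ (β-2) ≤ b * β * x ^ (β-2) :=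
      mul_le_mul_of_nonneg_left k2.le (by positivity)
    rcases eq_or_lt_of_le ha with hrfl | hapos
    · have hbpos : 0 < b := by linarith
      have : b * β * y ^ (β-2) < b * β * x ^ (β-2) :=
        mul_lt_mul_of_pos_left k2 (by positivity)
      simp only [hh]; linarith
    · have : a * α * y ^ (α-2) < a * α * x ^ (α-2) :=
        mul_lt_mul_of_pos_left k1 (by positivity)
      simp only [hh]; linarith
  -- h has a zero
  set m : ℝ := a * α + b * β with hm
  have hmpos : 0 < m := by nlinarith
  set ε : ℝ := min (2-α) (2-β) with hε
  have hεpos : 0 < ε := lt_min (by linarith) (by linarith)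
  have hε1 : ε ≤ 1 := le_trans (min_le_left _ _) (by linarith)
  -- lower bound point
  set tlo : ℝ := (min 1 ((m/c) ^ ε⁻¹)) / 2 with htlo
  have htlopos : 0 < tlo := by
    have : (0:ℝ) < (m/c) ^ ε⁻¹ := Real.rpow_pos_of_pos (by positivity) _
    have := lt_min one_pos this
    positivity
  have htlo1 : tlo ≤ 1 := by
    have : min 1 ((m/c) ^ ε⁻¹) ≤ 1 := min_le_left _ _
    linarith
  have hlopos : 0 < h tlo := by
    have hb1 : tlo ^ (-ε) ≤ tlo ^ (α-2) :=
      Real.rpow_le_rpow_of_exponent_ge htlopos htlo1 (by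
        have := min_le_left (2-α) (2-β); simp only [hε] at *; linarith)
    have hb2 : tlo ^ (-ε) ≤ tlo ^ (β-2) :=
      Real.rpow_le_rpow_of_exponent_ge htlopos htlo1 (by
        have := min_le_right (2-α) (2-β); simp only [hε] at *; linarith)
    have hmono : m * tlo ^ (-ε) ≤ a * α * tlo ^ (α-2) + b * β * tlo ^ (β-2) := by
      have n1 : a * α * tlo ^ (-ε) ≤ a * α * tlo ^ (α-2) :=
        mul_le_mul_of_nonneg_left hb1 (by positivity)
      have n2 : b * β * tlo ^ (-ε) ≤ b * β * tlo ^ (β-2) :=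
        mul_le_mul_of_nonneg_left hb2 (by positivity)
      simp only [hm]; nlinarith
    have hsmall : tlo ^ ε < m/c := by
      have h1 : tlo < (m/c) ^ ε⁻¹ := by
        have : min 1 ((m/c) ^ ε⁻¹) ≤ (m/c) ^ ε⁻¹ := min_le_right _ _
        have hp : (0:ℝ) < (m/c) ^ ε⁻¹ := Real.rpow_pos_of_pos (by positivity) _
        linarith
      calc tlo ^ ε < ((m/c) ^ ε⁻¹) ^ ε := Real.rpow_lt_rpow htlopos.le h1 hεpos
        _ = m/c := Real.rpow_inv_rpow (by positivity) hεpos.ne'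
    have hεpow : (0:ℝ) < tlo ^ ε := Real.rpow_pos_of_pos htlopos _
    have hkey : c < m * tlo ^ (-ε) := by
      rw [Real.rpow_neg htlopos.le,
        show m * (tlo^ε)⁻¹ = m / tlo^ε by ring, lt_div_iff₀ hεpow]
      rw [lt_div_iff₀ hc] at hsmall
      nlinarith
    simp only [hh]; linarith
  -- upper bound point
  set thi : ℝ := max (max tlo 1) ((m/c) ^ ε⁻¹ + 1) with hthi
  have htlothi : tlo ≤ thi := le_trans (le_max_left _ _) (le_max_left _ _)
  have hthi1 : (1:ℝ) ≤ thi := le_trans (le_max_right _ _) (le_max_left _ _)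
  have hthipos : (0:ℝ) < thi := lt_of_lt_of_le one_pos hthi1
  have hhineg : h thi < 0 := by
    have ub1 : thi ^ (α-2) ≤ thi ^ (-ε) :=
      Real.rpow_le_rpow_of_exponent_le hthi1 (by
        have := min_le_left (2-α) (2-β); simp only [hε] at *; linarith)
    have ub2 : thi ^ (β-2) ≤ thi ^ (-ε) :=
      Real.rpow_le_rpow_of_exponent_le hthi1 (by
        have := min_le_right (2-α) (2-β); simp only [hε] at *; linarith)
    have hmono : a * α * thi ^ (α-2) + b * β * thi ^ (β-2) ≤ m * thi ^ (-ε) := by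
      have n1 : a * α * thi ^ (α-2) ≤ a * α * thi ^ (-ε) :=
        mul_le_mul_of_nonneg_left ub1 (by positivity)
      have n2 : b * β * thi ^ (β-2) ≤ b * β * thi ^ (-ε) :=
        mul_le_mul_of_nonneg_left ub2 (by positivity)
      simp only [hm]; nlinarith
    have hbig : m/c < thi ^ ε := by
      have hp : (0:ℝ) ≤ (m/c) ^ ε⁻¹ := Real.rpow_nonneg (by positivity) _
      have h1 : (m/c) ^ ε⁻¹ < thi := by
        have : (m/c) ^ ε⁻¹ + 1 ≤ thi := le_max_right _ _
        linarith
      calc m/c = ((m/c) ^ ε⁻¹) ^ ε := (Real.rpow_inv_rpow (by positivity) hεpos.ne').symm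
        _ < thi ^ ε := Real.rpow_lt_rpow hp h1 hεpos
    have hεpow : (0:ℝ) < thi ^ ε := Real.rpow_pos_of_pos hthipos _
    have hkey : m * thi ^ (-ε) < c := by
      rw [Real.rpow_neg hthipos.le]
      rw [div_lt_iff₀ hc] at hbig
      rw [show m * (thi^ε)⁻¹ = m / thi^ε by ring, div_lt_iff₀ hεpow]
      linarith
    simp only [hh]; linarith
  -- intermediate value theorem gives the zero of h
  have hcontOn : ContinuousOn h (Set.Icc tlo thi) := by
    intro x hx
    have hxpos : 0 < x := lt_of_lt_of_le htlopos hx.1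
    apply ContinuousAt.continuousWithinAt
    have c1 : ContinuousAt (fun s : ℝ => s ^ (α-2)) x :=
      Real.continuousAt_rpow_const x (α-2) (Or.inl hxpos.ne')
    have c2 : ContinuousAt (fun s : ℝ => s ^ (β-2)) x :=
      Real.continuousAt_rpow_const x (β-2) (Or.inl hxpos.ne')
    exact ((c1.const_mul (a*α)).add (c2.const_mul (b*β))).sub continuousAt_const
  obtain ⟨t₀, ht₀mem, ht₀zero⟩ :=
    intermediate_value_Icc' htlothi hcontOn ⟨hhineg.le, hlopos.le⟩
  have ht₀pos : 0 < t₀ := lt_of_lt_of_le htlopos ht₀mem.1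
  have ht₀Ioi : t₀ ∈ Set.Ioi (0:ℝ) := ht₀pos
  -- sign of the derivative
  have hsign_pos : ∀ s : ℝ, 0 < s → s < t₀ → 0 < deriv φ s := by
    intro s hs hst
    rw [hdz s hs]
    have : h t₀ < h s := hanti hs ht₀Ioi hst
    rw [ht₀zero] at this
    exact mul_pos hs this
  have hsign_neg : ∀ s : ℝ, t₀ < s → deriv φ s < 0 := by
    intro s hst
    have hs : 0 < s := lt_trans ht₀pos hst
    rw [hdz s hs]
    have : h s < h t₀ := hanti ht₀Ioi hs hst
    rw [ht₀zero] at this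
    exact mul_neg_of_pos_of_neg hs this
  -- maximality
  have hmax : ∀ t : ℝ, 0 < t → φ t ≤ φ t₀ := by
    intro t ht
    rcases lt_trichotomy t t₀ with hlt | heq | hgt
    · have mono : StrictMonoOn φ (Set.Icc t t₀) :=
        strictMonoOn_of_deriv_pos (convex_Icc _ _) hcont.continuousOn (by
          intro x hx
          rw [interior_Icc] at hx
          exact hsign_pos x (lt_trans ht hx.1) hx.2)
      exact (mono (Set.left_mem_Icc.2 hlt.le) (Set.right_mem_Icc.2 hlt.le) hlt).le
    · rw [heq]
    · have anti : StrictAntiOn φ (Set.Icc t₀ t) :=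
        strictAntiOn_of_deriv_neg (convex_Icc _ _) hcont.continuousOn (by
          intro x hx
          rw [interior_Icc] at hx
          exact hsign_neg x hx.1)
      exact (anti (Set.left_mem_Icc.2 hgt.le) (Set.right_mem_Icc.2 hgt.le) hgt).le
  -- critical point characterisation
  have hcrit : ∀ t : ℝ, 0 < t → (deriv φ t = 0 ↔ t = t₀) := by
    intro t ht
    constructor
    · intro hz
      rw [hdz t ht] at hz
      have hht : h t = 0 := by
        rcases mul_eq_zero.1 hz with h' | h'
        · exact absurd h' ht.ne'
        · exact h'
      exact hanti.injOn (Set.mem_Ioi.2 ht) ht₀Ioi (hht.trans ht₀zero.symm)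
    · rintro rfl
      rw [hdz t ht, ht₀zero, mul_zero]
  refine ⟨t₀, ⟨ht₀pos, hmax, hcrit⟩, ?_⟩
  rintro t₁ ⟨ht₁pos, -, hiff⟩
  exact ((hiff t₀ ht₀pos).mp (by rw [hdz t₀ ht₀pos, ht₀zero, mul_zero])).symm

/-- The fibering map `φ(t) = a t^{(p+1)/p} + b t^{(q+1)/q} - (c/2) t²` is positive for small
`t > 0`, negative for large `t`, and has a unique maximum point on `(0,∞)`, which is also its
unique critical point there. -/
theorem fibering_map_unique_maximum
    (p q a b c : ℝ) (hp : 1 < p) (hq : 1 < q)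
    (ha : 0 ≤ a) (hb : 0 ≤ b) (hab : 0 < a + b) (hc : 0 < c) :
    (∃ δ : ℝ, 0 < δ ∧ ∀ t : ℝ, 0 < t → t < δ →
      0 < a * t ^ ((p+1)/p) + b * t ^ ((q+1)/q) - c/2 * t ^ (2:ℕ)) ∧
    (∃ T : ℝ, ∀ t : ℝ, T < t →
      a * t ^ ((p+1)/p) + b * t ^ ((q+1)/q) - c/2 * t ^ (2:ℕ) < 0) ∧
    (∃! t₀ : ℝ, 0 < t₀ ∧
      (∀ t : ℝ, 0 < t →
        a * t ^ ((p+1)/p) + b * t ^ ((q+1)/q) - c/2 * t ^ (2:ℕ)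
          ≤ a * t₀ ^ ((p+1)/p) + b * t₀ ^ ((q+1)/q) - c/2 * t₀ ^ (2:ℕ)) ∧
      (∀ t : ℝ, 0 < t →
        (deriv (fun s : ℝ => a * s ^ ((p+1)/p) + b * s ^ ((q+1)/q) - c/2 * s ^ (2:ℕ)) t = 0
          ↔ t = t₀))) := by
  have hppos : (0:ℝ) < p := lt_trans one_pos hp
  have hqpos : (0:ℝ) < q := lt_trans one_pos hq
  have hα1 : 1 < (p+1)/p := by rw [lt_div_iff₀ hppos]; linarith
  have hα2 : (p+1)/p < 2 := by rw [div_lt_iff₀ hppos]; linarith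
  have hβ1 : 1 < (q+1)/q := by rw [lt_div_iff₀ hqpos]; linarith
  have hβ2 : (q+1)/q < 2 := by rw [div_lt_iff₀ hqpos]; linarith
  refine ⟨?_, ?_, core_aux a b c _ _ ha hb hab hc hα1 hα2 hβ1 hβ2⟩
  · -- positive for small t
    rcases eq_or_lt_of_le ha with hrfl | hapos
    · have hbpos : 0 < b := by linarith
      obtain ⟨δ, hδpos, hδ⟩ := small_aux b c ((q+1)/q) hbpos hc hβ2
      refine ⟨δ, hδpos, fun t ht htδ => ?_⟩
      have h1 := hδ t ht htδ
      have h2 : 0 ≤ a * t ^ ((p+1)/p) :=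
        mul_nonneg ha (Real.rpow_nonneg ht.le _)
      linarith
    · obtain ⟨δ, hδpos, hδ⟩ := small_aux a c ((p+1)/p) hapos hc hα2
      refine ⟨δ, hδpos, fun t ht htδ => ?_⟩
      have h1 := hδ t ht htδ
      have h2 : 0 ≤ b * t ^ ((q+1)/q) :=
        mul_nonneg hb (Real.rpow_nonneg ht.le _)
      linarith
  · -- negative for large t
    obtain ⟨T, hT⟩ := large_aux a b c ((p+1)/p) ((q+1)/q) ha hb hc hα2 hβ2
    exact ⟨T, fun t ht => by linarith [hT t ht]⟩
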